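/- (A general variant of Hoffman's Lemma.) Let X be a commutative additive group, let 𝒮_X : X → [-∞,∞], and let d(u,v) := 𝒮_X(u−v) for u,v ∈ X. Let Y be an additive group and let L : X → Y be additive (L(u+v) = L(u)+L(v) for all u,v ∈ X). Let Ỹ be an additive subgroup of Y containing the range I := L(X), and let L̃ : Ỹ → X be an extended generalized inverse of L: for every t ∈ L(X) there exist v ∈ X and a₀ ∈ X with L(a₀) = 0, L(v) = t and L̃(t) = v + a₀. Suppose L̃ is α-Lipschitz continuous from (Ỹ,𝒮_Ỹ) to (X,𝒮_X) for some real α ≠ 0 (α = 0 allowed if 𝒮_Ỹ is real-valued), i.e., 𝒮_X(L̃(s) − L̃(t)) ≤ α·𝒮_Ỹ(s−t) for all s,t ∈ Ỹ, where 𝒮_Ỹ : Ỹ → [-∞,∞]. For t ∈ I set A_t := {x ∈ X : L(x) = t}. Then for all s,t ∈ I, the Hausdorff distance induced by d satisfies D_H(A_s,A_t) ≤ max{α·𝒮_Ỹ(s−t), α·𝒮_Ỹ(t−s)}. -/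

import Mathlib

/-- The distance from a point to a set, induced by an arbitrary
pseudo-distance `d : X → X → EReal`. -/
noncomputable def distSet {X : Type*} (d : X → X → EReal) (x : X) (A : Set X) : EReal :=
  ⨅ a ∈ A, d x a

/-- The asymmetric Hausdorff distance induced by `d`. -/
noncomputable def DasyH {X : Type*} (d : X → X → EReal) (A A' : Set X) : EReal :=
  ⨆ a ∈ A, distSet d a A'

/-- The (symmetric) Hausdorff distance induced by `d`. -/
noncomputable def DH {X : Type*} (d : X → X → EReal) (A A' : Set X) : EReal :=
  max (DasyH d A A') (DasyH d A' A)

/-- **A general variant of Hoffman's Lemma.**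
Let `X` be a commutative additive group with pseudo-magnitude `SX` inducing the
pseudo-distance `d u v := SX (u - v)`, let `Y` be an additive group, `L : X → Y`
additive, `Ytil` an additive subgroup of `Y` containing the range of `L`, and let
`Lt` be an extended generalized inverse of `L` which is `α`-Lipschitz continuous from
`(Ytil, SY)` to `(X, SX)`. Then for the fibers `A_t := {x | L x = t}`, `t ∈ L(X)`,
one has `D_H(A_s, A_t) ≤ max (α·SY (s - t)) (α·SY (t - s))`. -/
theorem hoffman_general {X Y : Type*} [AddCommGroup X] [AddGroup Y]
    (SX : X → EReal) (SY : Y → EReal)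
    (L : X → Y) (hL : ∀ u v : X, L (u + v) = L u + L v)
    (Ytil : AddSubgroup Y) (hrange : ∀ x : X, L x ∈ Ytil)
    (Lt : Y → X)
    (hEGI : ∀ x : X, ∃ v a₀ : X, L a₀ = 0 ∧ L v = L x ∧ Lt (L x) = v + a₀)
    (α : ℝ)
    (hα : α ≠ 0 ∨ ∀ y ∈ Ytil, ∃ r : ℝ, SY y = (r : EReal))
    (hLip : ∀ s ∈ Ytil, ∀ t ∈ Ytil, SX (Lt s - Lt t) ≤ (α : EReal) * SY (s - t)) :
    ∀ x y : X,
      DH (fun u v : X => SX (u - v)) {z : X | L z = L x} {z : X | L z = L y}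
        ≤ max ((α : EReal) * SY (L x - L y)) ((α : EReal) * SY (L y - L x)) := by
  -- L is an additive homomorphism
  have hL0 : L 0 = 0 := by
    have := hL 0 0
    simp only [add_zero] at this
    exact right_eq_add.mp this
  have hLneg : ∀ u : X, L (-u) = - L u := by
    intro u
    have := hL u (-u)
    simp [add_neg_cancel, hL0] at this
    exact (neg_eq_of_add_eq_zero_right this.symm).symm
  have hLsub : ∀ u v : X, L (u - v) = L u - L v := by
    intro u v
    rw [sub_eq_add_neg, hL, hLneg, sub_eq_add_neg]
  -- L (Lt (L x)) = L x
  have hLL : ∀ x : X, L (Lt (L x)) = L x := by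
    intro x
    obtain ⟨v, a₀, h0, hv, hlt⟩ := hEGI x
    rw [hlt, hL, h0, add_zero, hv]
  -- key asymmetric estimate
  have key : ∀ x y : X,
      DasyH (fun u v : X => SX (u - v)) {z : X | L z = L x} {z : X | L z = L y}
        ≤ (α : EReal) * SY (L x - L y) := by
    intro x y
    apply iSup₂_le
    intro a ha
    have ha' : L a = L x := ha
    set b : X := a - Lt (L x) + Lt (L y) with hb
    have hbmem : b ∈ {z : X | L z = L y} := by
      show L b = L y
      rw [hb, hL, hLsub, hLL, hLL, ha', sub_self, zero_add]
    calc distSet (fun u v : X => SX (u - v)) a {z : X | L z = L y}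
        ≤ SX (a - b) := iInf₂_le b hbmem
      _ = SX (Lt (L x) - Lt (L y)) := by
          congr 1
          rw [hb]
          abel
      _ ≤ (α : EReal) * SY (L x - L y) := hLip _ (hrange x) _ (hrange y)
  intro x y
  exact max_le_max (key x y) (key y x)
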